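/- arXiv:1804.03953 — 4 statements merged into one kernel-verified Lean document; each statement's English description precedes it below -/
import Mathlib

section
/- For every ε > 0 and dimension d there is a constant k = k(ε,d) such that for every convex body P in R^d with B(0,1) ⊆ P ⊆ B(0,d), there exists a set V' of at most k points, each of the form (1+ε)·v for some extreme point v of P, with P ⊆ conv(V'). -/
open Set Metric Pointwise

/-- Sparsification for normalized bodies: for every `ε > 0` and dimension `d` there is a
constant `k = k(ε,d)` such that every convex body `P` with `B(0,1) ⊆ P ⊆ B(0,d)` admits
a set `V'` of at most `k` points, each of the form `(1+ε)·v` for an extreme point `v`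
of `P`, with `P ⊆ conv(V')`. -/
theorem stmt13 (d : ℕ) (ε : ℝ) (hε : 0 < ε) :
    ∃ k : ℕ, ∀ P : Set (EuclideanSpace ℝ (Fin d)),
      Convex ℝ P → IsCompact P →
      Metric.closedBall 0 1 ⊆ P → P ⊆ Metric.closedBall 0 d →
      ∃ V' : Finset (EuclideanSpace ℝ (Fin d)), V'.card ≤ k ∧
        (∀ x ∈ V', ∃ v ∈ P.extremePoints ℝ, x = (1 + ε) • v) ∧
        P ⊆ convexHull ℝ (V' : Set (EuclideanSpace ℝ (Fin d))) := by
  classical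
  have hδ : (0:ℝ) < ε/3 := by linarith
  obtain ⟨T, hTsub, hTfin, hTcov⟩ :=
    (isCompact_closedBall (0 : EuclideanSpace ℝ (Fin d)) ((1+ε)*d)).finite_cover_balls hδ
  refine ⟨hTfin.toFinset.card, ?_⟩
  intro P hPconv hPcomp hball hPd
  set E : Set (EuclideanSpace ℝ (Fin d)) := P.extremePoints ℝ with hE
  have hKM : closure (convexHull ℝ E) = P :=
    closure_convexHull_extremePoints hPcomp hPconv
  have hEP : E ⊆ P := extremePoints_subset
  set S : Set (EuclideanSpace ℝ (Fin d)) := (1+ε) • E with hS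
  have h1ε : (0:ℝ) < 1 + ε := by linarith
  have hSsub : S ⊆ closedBall 0 ((1+ε)*d) := by
    rintro s ⟨v, hv, rfl⟩
    have hv' : ‖v‖ ≤ d := by
      simpa [mem_closedBall, dist_eq_norm] using hPd (hEP hv)
    simp only [mem_closedBall, dist_eq_norm, sub_zero, norm_smul, Real.norm_eq_abs,
      abs_of_pos h1ε]
    exact mul_le_mul_of_nonneg_left hv' h1ε.le
  -- pick representatives
  set T' := hTfin.toFinset.filter (fun t => (S ∩ ball t (ε/3)).Nonempty) with hT'
  set pick : EuclideanSpace ℝ (Fin d) → EuclideanSpace ℝ (Fin d) :=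
    fun t => if h : (S ∩ ball t (ε/3)).Nonempty then h.some else 0 with hpick
  set V' : Finset (EuclideanSpace ℝ (Fin d)) := T'.image pick with hV'
  have hpick_mem : ∀ t ∈ T', pick t ∈ S ∩ ball t (ε/3) := by
    intro t ht
    have h := (Finset.mem_filter.1 ht).2
    simp only [hpick, dif_pos h]
    exact h.some_mem
  refine ⟨V', ?_, ?_, ?_⟩
  · exact (Finset.card_image_le).trans (Finset.card_filter_le _ _)
  · intro x hx
    obtain ⟨t, ht, rfl⟩ := Finset.mem_image.1 hx
    obtain ⟨⟨v, hv, hvx⟩, -⟩ := hpick_mem t ht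
    exact ⟨v, hv, hvx.symm⟩
  -- coverage : every point of S is within 2ε/3 of V'
  have hcover : ∀ s ∈ S, ∃ w ∈ V', dist s w < 2*(ε/3) := by
    intro s hs
    have := hTcov (hSsub hs)
    simp only [mem_iUnion] at this
    obtain ⟨t, htT, hst⟩ := this
    have htT' : t ∈ T' := by
      refine Finset.mem_filter.2 ⟨hTfin.mem_toFinset.2 htT, ⟨s, hs, hst⟩⟩
    refine ⟨pick t, Finset.mem_image_of_mem _ htT', ?_⟩
    obtain ⟨-, hpt⟩ := hpick_mem t htT'
    calc dist s (pick t) ≤ dist s t + dist t (pick t) := dist_triangle _ _ _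
      _ < ε/3 + ε/3 := by
          exact add_lt_add (mem_ball.1 hst) (by simpa [dist_comm] using mem_ball.1 hpt)
      _ = 2*(ε/3) := by ring
  -- main inclusion
  intro x hx
  by_contra hxV
  have hVfin : (V' : Set (EuclideanSpace ℝ (Fin d))).Finite := V'.finite_toSet
  obtain ⟨f, c, hfc, hcx⟩ :=
    geometric_hahn_banach_closed_point (convex_convexHull ℝ _) (hVfin.isClosed_convexHull (𝕜 := ℝ)) hxV
  -- V' is nonempty, hence f ≠ 0
  have h0P : (0 : EuclideanSpace ℝ (Fin d)) ∈ P := hball (by simp)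
  have hEne : E.Nonempty := by
    by_contra h
    rw [not_nonempty_iff_eq_empty] at h
    rw [h] at hKM
    simp at hKM
    exact (hKM ▸ h0P : (0 : EuclideanSpace ℝ (Fin d)) ∈ (∅ : Set _))
  obtain ⟨v0, hv0⟩ := hEne
  have hs0 : (1+ε) • v0 ∈ S := ⟨v0, hv0, rfl⟩
  obtain ⟨w0, hw0, -⟩ := hcover _ hs0
  have hfw0 : f w0 < c := hfc _ (subset_convexHull ℝ _ hw0)
  have hfne : f ≠ 0 := by
    intro h
    rw [h] at hfw0 hcx
    simp at hfw0 hcx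
    linarith
  -- Riesz representation: a unit vector g with f g = ‖f‖
  set u : EuclideanSpace ℝ (Fin d) := (InnerProductSpace.toDual ℝ _).symm f with hu
  have hun : ‖u‖ = ‖f‖ := (InnerProductSpace.toDual ℝ _).symm.norm_map f
  have hfnpos : (0:ℝ) < ‖f‖ := norm_pos_iff.2 hfne
  have hupos : (0:ℝ) < ‖u‖ := by rwa [hun]
  set g : EuclideanSpace ℝ (Fin d) := ‖u‖⁻¹ • u with hg
  have hgnorm : ‖g‖ = 1 := by
    rw [hg, norm_smul, norm_inv, norm_norm, inv_mul_cancel₀ hupos.ne']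
  have hfg : f g = ‖f‖ := by
    have : (inner ℝ u g : ℝ) = f g := InnerProductSpace.toDual_symm_apply
    rw [← this, hg, real_inner_smul_right, real_inner_self_eq_norm_sq]
    rw [← hun]
    field_simp
  -- the point x + ε • g lies in (1+ε) • P, i.e. its rescaling lies in P
  have hgP : g ∈ P := hball (by simp [mem_closedBall, dist_eq_norm, hgnorm])
  set z : EuclideanSpace ℝ (Fin d) := (1/(1+ε)) • x + (ε/(1+ε)) • g with hz
  have hzP : z ∈ P := by
    refine hPconv hx hgP ?_ ?_ ?_
    · positivity
    · positivity
    · field_simp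
  -- halfspace containing E, hence its closed convex hull, hence z
  set C : Set (EuclideanSpace ℝ (Fin d)) :=
    {w | f ((1+ε) • w) ≤ c + 2*(ε/3) * ‖f‖} with hC
  have hCclosed : IsClosed C := by
    have : Continuous fun w : EuclideanSpace ℝ (Fin d) => f ((1+ε) • w) :=
      f.continuous.comp (continuous_const_smul _)
    exact isClosed_le this continuous_const
  have hCconv : Convex ℝ C := by
    have : C = {w | ((1+ε) • f : EuclideanSpace ℝ (Fin d) →L[ℝ] ℝ) w ≤ c + 2*(ε/3) * ‖f‖} := by
      ext w
      simp [hC, ContinuousLinearMap.smul_apply, map_smul, smul_eq_mul]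
    rw [this]
    exact convex_halfSpace_le (ContinuousLinearMap.toLinearMap _).isLinear _
  have hEC : E ⊆ C := by
    intro v hv
    have hsS : (1+ε) • v ∈ S := ⟨v, hv, rfl⟩
    obtain ⟨w, hwV, hdw⟩ := hcover _ hsS
    have hfw : f w < c := hfc _ (subset_convexHull ℝ _ hwV)
    have : f ((1+ε) • v) = f w + f ((1+ε) • v - w) := by
      rw [map_sub]; ring
    rw [hC, mem_setOf_eq, this]
    have hb : f ((1+ε) • v - w) ≤ ‖f‖ * ‖(1+ε) • v - w‖ := (f.le_opNorm _).trans' (le_abs_self _)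
    have hnb : ‖(1+ε) • v - w‖ ≤ 2*(ε/3) := by
      rw [← dist_eq_norm]; exact hdw.le
    have : ‖f‖ * ‖(1+ε) • v - w‖ ≤ 2*(ε/3) * ‖f‖ := by
      rw [mul_comm]
      exact mul_le_mul_of_nonneg_right hnb (norm_nonneg f)
    nlinarith
  have hzC : z ∈ C := by
    have h1 : convexHull ℝ E ⊆ C := convexHull_min hEC hCconv
    have h2 : closure (convexHull ℝ E) ⊆ C := closure_minimal h1 hCclosed
    exact h2 (hKM.symm ▸ hzP)
  -- contradiction
  have hzeq : (1+ε) • z = x + ε • g := by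
    rw [hz, smul_add, smul_smul, smul_smul]
    congr 1 <;> congr 1 <;> field_simp <;> simp
  have : f x + ε * ‖f‖ ≤ c + 2*(ε/3) * ‖f‖ := by
    have := hzC
    rw [hC, mem_setOf_eq, hzeq, map_add, map_smul, smul_eq_mul, hfg] at this
    linarith
  nlinarith
end

section
/- For every ε > 0 and dimension d there is a constant k = k(ε,d) such that for any convex polytope P ⊆ R^d there exist a point c ∈ P and a set S of at most k vertices of P with P ⊆ conv({c + (1+ε)(v − c) : v ∈ S}). -/
open Finset
set_option linter.unusedSectionVars false

variable {X : Type*} [NormedAddCommGroup X] [InnerProductSpace ℝ X] [FiniteDimensional ℝ X]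

noncomputable def dW (W : Submodule ℝ X) (x : X) : ℝ := ‖x - (Submodule.orthogonalProjectionOnto W x : X)‖

lemma dW_nonneg (W : Submodule ℝ X) (x : X) : 0 ≤ dW W x := norm_nonneg _

lemma dW_eq_zero_iff (W : Submodule ℝ X) (x : X) : dW W x = 0 ↔ x ∈ W := by
  rw [dW, norm_eq_zero, sub_eq_zero, eq_comm, ← Submodule.starProjection_apply, Submodule.starProjection_eq_self_iff]

lemma dW_smul (W : Submodule ℝ X) (r : ℝ) (x : X) : dW W (r • x) = |r| * dW W x := by
  rw [dW, dW, map_smul, Submodule.coe_smul, ← smul_sub, norm_smul, Real.norm_eq_abs]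

lemma dW_add_le (W : Submodule ℝ X) (x y : X) : dW W (x + y) ≤ dW W x + dW W y := by
  rw [dW, dW, dW, map_add, Submodule.coe_add]
  calc ‖x + y - ((Submodule.orthogonalProjectionOnto W x : X) + (Submodule.orthogonalProjectionOnto W y : X))‖
      = ‖(x - (Submodule.orthogonalProjectionOnto W x : X)) + (y - (Submodule.orthogonalProjectionOnto W y : X))‖ := by
        congr 1; abel
    _ ≤ _ := norm_add_le _ _

lemma dW_add_mem (W : Submodule ℝ X) (x : X) {w : X} (hw : w ∈ W) : dW W (x + w) = dW W x := by
  rw [dW, dW, map_add, Submodule.coe_add]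
  have : (Submodule.orthogonalProjectionOnto W w : X) = w := Submodule.starProjection_eq_self_iff.2 hw
  rw [this]
  congr 1
  abel


/-- span of the first `n` vectors of a sequence -/
noncomputable def Wseq (u : ℕ → X) (n : ℕ) : Submodule ℝ X := Submodule.span ℝ (u '' Set.Iio n)

lemma Iio_succ_nat (n : ℕ) : Set.Iio (n+1) = insert n (Set.Iio n) := by
  ext j; simp only [Set.mem_Iio, Set.mem_insert_iff]; omega

lemma Wseq_succ (u : ℕ → X) (n : ℕ) :
    Wseq u (n+1) = Submodule.span ℝ (insert (u n) (u '' Set.Iio n)) := by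
  rw [Wseq, Iio_succ_nat, Set.image_insert_eq]

lemma Wseq_mono (u : ℕ → X) {a b : ℕ} (h : a ≤ b) : Wseq u a ≤ Wseq u b :=
  Submodule.span_mono (Set.image_mono (fun _ hx => lt_of_lt_of_le hx h))

lemma mem_Wseq_of_lt (u : ℕ → X) {i n : ℕ} (h : i < n) : u i ∈ Wseq u n :=
  Submodule.subset_span ⟨i, h, rfl⟩

lemma coeff_lemma (u : ℕ → X) :
    ∀ (n : ℕ) (K : ℝ), 0 ≤ K → (∀ i, i < n → u i ∉ Wseq u i) →
    (∀ i j, i < n → j < n → dW (Wseq u i) (u j) ≤ dW (Wseq u i) (u i)) →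
    ∀ y : X, y ∈ Wseq u n → (∀ i, i < n → dW (Wseq u i) y ≤ K * dW (Wseq u i) (u i)) →
    ∃ t : ℕ → ℝ, y = ∑ i ∈ Finset.range n, t i • u i ∧ ∀ i, i < n → |t i| ≤ 2^n * K := by
  intro n
  induction n with
  | zero =>
    intro K hK _ _ y hy _
    refine ⟨fun _ => 0, ?_, fun i hi => by omega⟩
    have he : u '' Set.Iio 0 = ∅ := by ext x; simp
    rw [Wseq, he, Submodule.span_empty, Submodule.mem_bot] at hy
    exact hy
  | succ n ih =>
    intro K hK hpos hgr y hy hd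
    rw [Wseq_succ, Submodule.mem_span_insert] at hy
    obtain ⟨a, z, hz, rfl⟩ := hy
    have hzW : z ∈ Wseq u n := hz
    have hun : 0 < dW (Wseq u n) (u n) := by
      rcases lt_or_eq_of_le (dW_nonneg (Wseq u n) (u n)) with h | h
      · exact h
      · exact absurd ((dW_eq_zero_iff _ _).1 h.symm) (hpos n (Nat.lt_succ_self n))
    have hdy : dW (Wseq u n) (a • u n + z) = |a| * dW (Wseq u n) (u n) := by
      rw [dW_add_mem _ _ hzW, dW_smul]
    have ha : |a| ≤ K := by
      have := hd n (Nat.lt_succ_self n)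
      rw [hdy] at this
      exact le_of_mul_le_mul_right (by linarith) hun
    -- bound dW of z for i < n
    have hz_d : ∀ i, i < n → dW (Wseq u i) z ≤ (2*K) * dW (Wseq u i) (u i) := by
      intro i hi
      have h1 : z = (a • u n + z) + (-a) • u n := by module
      calc dW (Wseq u i) z = dW (Wseq u i) ((a • u n + z) + (-a) • u n) := by rw [← h1]
        _ ≤ dW (Wseq u i) (a • u n + z) + dW (Wseq u i) ((-a) • u n) := dW_add_le _ _ _
        _ ≤ K * dW (Wseq u i) (u i) + |a| * dW (Wseq u i) (u n) := by
            rw [dW_smul, abs_neg]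
            exact add_le_add (hd i (by omega)) (le_refl _)
        _ ≤ K * dW (Wseq u i) (u i) + K * dW (Wseq u i) (u i) := by
            refine add_le_add (le_refl _) ?_
            have h2 := hgr i n (by omega) (by omega)
            have h3 : |a| * dW (Wseq u i) (u n) ≤ K * dW (Wseq u i) (u n) :=
              mul_le_mul_of_nonneg_right ha (dW_nonneg _ _)
            exact h3.trans (mul_le_mul_of_nonneg_left h2 hK)
        _ = (2*K) * dW (Wseq u i) (u i) := by ring
    obtain ⟨t, htz, htb⟩ := ih (2*K) (by linarith) (fun i hi => hpos i (by omega))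
      (fun i j hi hj => hgr i j (by omega) (by omega)) z hzW hz_d
    refine ⟨fun i => if i = n then a else t i, ?_, ?_⟩
    · rw [Finset.sum_range_succ]
      simp only [if_pos rfl]
      have : ∑ i ∈ Finset.range n, (if i = n then a else t i) • u i
          = ∑ i ∈ Finset.range n, t i • u i := by
        refine Finset.sum_congr rfl (fun i hi => ?_)
        rw [if_neg (by simp at hi; omega)]
      rw [this, ← htz]
      exact add_comm _ _
    · intro i hi
      by_cases h : i = n
      · subst h
        simp only [if_pos rfl]
        calc |a| ≤ K := ha
          _ ≤ 2^(i+1) * K := le_mul_of_one_le_left hK (one_le_pow₀ (by norm_num))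
      · simp only [if_neg h]
        calc |t i| ≤ 2^n * (2*K) := htb i (by omega)
          _ = 2^(n+1) * K := by ring

lemma dW_pos_of_not_mem {W : Submodule ℝ X} {x : X} (h : x ∉ W) : 0 < dW W x := by
  rcases lt_or_eq_of_le (dW_nonneg W x) with h' | h'
  · exact h'
  · exact absurd ((dW_eq_zero_iff _ _).1 h'.symm) h


noncomputable def gstep (U : Finset X) (hU : U.Nonempty) (l : List X) : X :=
  (U.exists_max_image (dW (Submodule.span ℝ {x | x ∈ l})) hU).choose

lemma gstep_spec (U : Finset X) (hU : U.Nonempty) (l : List X) :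
    gstep U hU l ∈ U ∧ ∀ x ∈ U,
      dW (Submodule.span ℝ {x | x ∈ l}) x ≤ dW (Submodule.span ℝ {x | x ∈ l}) (gstep U hU l) :=
  (U.exists_max_image (dW (Submodule.span ℝ {x | x ∈ l})) hU).choose_spec

noncomputable def gaux (U : Finset X) (hU : U.Nonempty) : ℕ → List X
  | 0 => []
  | (n+1) => gaux U hU n ++ [gstep U hU (gaux U hU n)]

lemma gaux_set (U : Finset X) (hU : U.Nonempty) (n : ℕ) :
    {x | x ∈ gaux U hU n} = (fun k => gstep U hU (gaux U hU k)) '' Set.Iio n := by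
  induction n with
  | zero => ext x; simp [gaux]
  | succ n ih =>
    ext x
    simp only [gaux, List.mem_append, List.mem_singleton, Set.mem_setOf_eq, Set.mem_image,
      Set.mem_Iio]
    constructor
    · rintro (h | h)
      · obtain ⟨k, hk, rfl⟩ := (Set.ext_iff.1 ih x).1 h
        have hk' : k < n := hk
        exact ⟨k, by omega, rfl⟩
      · exact ⟨n, by omega, h.symm⟩
    · rintro ⟨k, hk, rfl⟩
      rcases Nat.lt_or_ge k n with h | h
      · left; exact (Set.ext_iff.1 ih _).2 ⟨k, h, rfl⟩
      · right; have : k = n := by omega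
        rw [this]

lemma greedy_seq (U : Finset X) (hU : U.Nonempty) :
    ∃ u : ℕ → X, ∀ n, u n ∈ U ∧ ∀ x ∈ U, dW (Wseq u n) x ≤ dW (Wseq u n) (u n) := by
  refine ⟨fun k => gstep U hU (gaux U hU k), fun n => ?_⟩
  have hset := gaux_set U hU n
  have hW : Wseq (fun k => gstep U hU (gaux U hU k)) n
      = Submodule.span ℝ {x | x ∈ gaux U hU n} := by
    rw [Wseq, hset]
  rw [hW]
  exact gstep_spec U hU (gaux U hU n)

lemma greedy (U : Finset X) (hU : U.Nonempty) :
    ∃ (m : ℕ) (u : ℕ → X), m ≤ Module.finrank ℝ X ∧ (∀ i, i < m → u i ∈ U) ∧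
      (∀ i, i < m → u i ∉ Wseq u i) ∧
      (∀ i, i < m → ∀ x ∈ U, dW (Wseq u i) x ≤ dW (Wseq u i) (u i)) ∧
      (∀ x ∈ U, x ∈ Wseq u m) := by
  classical
  -- construct the sequence by recursion
  obtain ⟨u, hu⟩ := greedy_seq U hU
  set D := Module.finrank ℝ X with hD
  have sat : ∀ n, (∀ x ∈ U, x ∈ Wseq u n) ∨ n ≤ Module.finrank ℝ (Wseq u n) := by
    intro n
    induction n with
    | zero => right; exact Nat.zero_le _
    | succ n ih =>
      rcases ih with h | h
      · left; intro x hx; exact Wseq_mono u (Nat.le_succ n) (h x hx)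
      · by_cases hs : ∀ x ∈ U, x ∈ Wseq u n
        · left; intro x hx; exact Wseq_mono u (Nat.le_succ n) (hs x hx)
        · right
          push_neg at hs
          obtain ⟨x, hxU, hxW⟩ := hs
          have hxd : 0 < dW (Wseq u n) x := dW_pos_of_not_mem hxW
          have hud : 0 < dW (Wseq u n) (u n) := lt_of_lt_of_le hxd ((hu n).2 x hxU)
          have hun : u n ∉ Wseq u n := fun hmem => by
            rw [← dW_eq_zero_iff (Wseq u n) (u n)] at hmem
            exact lt_irrefl _ (hmem ▸ hud)
          have hlt : Wseq u n < Wseq u (n+1) := by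
            refine lt_of_le_of_ne (Wseq_mono u (Nat.le_succ n)) (fun he => hun ?_)
            rw [he]; exact mem_Wseq_of_lt u (Nat.lt_succ_self n)
          have := Submodule.finrank_lt_finrank_of_lt hlt
          omega
  have satD : ∀ x ∈ U, x ∈ Wseq u D := by
    rcases sat D with h | h
    · exact h
    · have htop : Wseq u D = ⊤ := Submodule.eq_top_of_finrank_eq
        (le_antisymm (Submodule.finrank_le _) h)
      intro x hx; rw [htop]; trivial
  have hex : ∃ n, ∀ x ∈ U, x ∈ Wseq u n := ⟨D, satD⟩
  set m := Nat.find hex with hm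
  have hmD : m ≤ D := Nat.find_le satD
  refine ⟨m, u, hmD, fun i _ => (hu i).1, ?_, fun i _ => (hu i).2, Nat.find_spec hex⟩
  intro i him
  have hni := Nat.find_min hex him
  push_neg at hni
  obtain ⟨x, hxU, hxW⟩ := hni
  have hxd : 0 < dW (Wseq u i) x := dW_pos_of_not_mem hxW
  have hud : 0 < dW (Wseq u i) (u i) := lt_of_lt_of_le hxd ((hu i).2 x hxU)
  intro hmem
  rw [← dW_eq_zero_iff (Wseq u i) (u i)] at hmem
  exact lt_irrefl _ (hmem ▸ hud)


lemma abs_sub_lt_one_of_floor_eq {a b : ℝ} (h : ⌊a⌋ = ⌊b⌋) : |a - b| < 1 := by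
  have h1 := Int.floor_le a
  have h2 := Int.lt_floor_add_one a
  have h3 := Int.floor_le b
  have h4 := Int.lt_floor_add_one b
  rw [h] at h1 h2
  rw [abs_sub_lt_iff]
  constructor <;> linarith

set_option maxHeartbeats 2000000 in
/-- Sparsification theorem: for every `ε > 0` and dimension `d` there is a constant
`k = k(ε,d)` such that every convex polytope `P ⊆ ℝ^d` has a center point `c ∈ P` and a
set `S` of at most `k` of its vertices with `P` contained in the convex hull of the
expansion of `S` about `c` by factor `1+ε`. -/
theorem stmt14 (d : ℕ) (ε : ℝ) (hε : 0 < ε) :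
    ∃ k : ℕ, ∀ V : Finset (EuclideanSpace ℝ (Fin d)), V.Nonempty →
      ∀ P : Set (EuclideanSpace ℝ (Fin d)),
        P = convexHull ℝ (V : Set (EuclideanSpace ℝ (Fin d))) →
        ∃ c ∈ P, ∃ S : Finset (EuclideanSpace ℝ (Fin d)),
          (S : Set (EuclideanSpace ℝ (Fin d))) ⊆ P.extremePoints ℝ ∧ S.card ≤ k ∧
          P ⊆ convexHull ℝ
            ((fun v => c + (1 + ε) • (v - c)) '' (S : Set (EuclideanSpace ℝ (Fin d)))) := by
  classical
  set X := EuclideanSpace ℝ (Fin d) with hX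
  set M : ℝ := 2^d with hM
  set mu : ℝ := ε / ((2*(d:ℝ)+2)*((d:ℝ)+1)) with hmu_def
  have hmu : 0 < mu := by
    apply div_pos hε
    positivity
  set b : ℤ := ⌈M/mu⌉ with hb_def
  have hb0 : 0 ≤ b := Int.ceil_nonneg (by positivity)
  refine ⟨(Finset.Icc (fun _ : Fin d => -b) (fun _ : Fin d => b)).card + (d+1), ?_⟩
  intro V hV P hP
  -- extreme points
  set E : Set X := P.extremePoints ℝ with hE
  have hPcompact : IsCompact P := by
    rw [hP]; exact (V.finite_toSet).isCompact_convexHull ℝ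
  have hPconv : Convex ℝ P := by rw [hP]; exact convex_convexHull ℝ _
  have hPne : P.Nonempty := by
    obtain ⟨v, hv⟩ := hV
    exact ⟨v, by rw [hP]; exact subset_convexHull ℝ _ hv⟩
  have hEV : E ⊆ ↑V := by rw [hE, hP]; exact extremePoints_convexHull_subset
  set V' : Finset X := V.filter (fun x => x ∈ E) with hV'_def
  have hV'E : (V' : Set X) = E := by
    ext x
    simp only [hV'_def, Finset.coe_filter, Set.mem_setOf_eq, Finset.mem_coe]
    exact ⟨fun h => h.2, fun h => ⟨hEV h, h⟩⟩
  have hV'ne : V'.Nonempty := by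
    obtain ⟨x, hx⟩ := hPcompact.extremePoints_nonempty hPne
    exact ⟨x, by rw [← Finset.mem_coe, hV'E]; exact hx⟩
  have hPE : convexHull ℝ (V' : Set X) = P := by
    rw [hV'E, hE]
    have hclosed : IsClosed (convexHull ℝ (P.extremePoints ℝ)) := by
      have : (P.extremePoints ℝ).Finite := (V.finite_toSet).subset hEV
      exact this.isClosed_convexHull ℝ
    rw [← hclosed.closure_eq]
    exact closure_convexHull_extremePoints hPcompact hPconv
  obtain ⟨p₀, hp₀⟩ := hV'ne
  set U : Finset X := V'.image (fun x => x - p₀) with hU_def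
  have hUne : U.Nonempty := ⟨p₀ - p₀, Finset.mem_image.2 ⟨p₀, hp₀, rfl⟩⟩
  obtain ⟨m, u, hmd, humem, hupos, humax, huspan⟩ := greedy U hUne
  have hmd' : m ≤ d := by
    rwa [finrank_euclideanSpace_fin] at hmd
  -- the simplex vertices
  have hq : ∀ i, i < m → ∃ y, y ∈ V' ∧ y - p₀ = u i := by
    intro i hi
    obtain ⟨y, hy, hy'⟩ := Finset.mem_image.1 (humem i hi)
    exact ⟨y, hy, hy'⟩
  set q : ℕ → X := fun i => if h : i < m then (hq i h).choose else p₀ with hq_def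
  have hqV : ∀ i, i < m → q i ∈ V' ∧ q i - p₀ = u i := by
    intro i hi
    rw [hq_def]
    simp only [dif_pos hi]
    exact (hq i hi).choose_spec
  -- coefficients
  have hTex : ∀ x, x ∈ V' → ∃ t : ℕ → ℝ,
      x - p₀ = ∑ i ∈ Finset.range m, t i • u i ∧ ∀ i, i < m → |t i| ≤ M := by
    intro x hx
    have hyU : x - p₀ ∈ U := Finset.mem_image.2 ⟨x, hx, rfl⟩
    obtain ⟨t, ht1, ht2⟩ := coeff_lemma u m 1 zero_le_one hupos
      (fun i j hi hj => humax i hi (u j) (humem j hj)) (x - p₀) (huspan _ hyU)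
      (fun i hi => by rw [one_mul]; exact humax i hi (x - p₀) hyU)
    refine ⟨t, ht1, fun i hi => (ht2 i hi).trans ?_⟩
    rw [mul_one, hM]
    exact pow_le_pow_right₀ one_le_two hmd'
  set T : X → ℕ → ℝ := fun x => if hx : x ∈ V' then (hTex x hx).choose else fun _ => 0
    with hT_def
  have hT : ∀ x (hx : x ∈ V'), x - p₀ = ∑ i ∈ Finset.range m, T x i • u i
      ∧ ∀ i, i < m → |T x i| ≤ M := by
    intro x hx
    rw [hT_def]
    simp only [dif_pos hx]
    exact (hTex x hx).choose_spec
  -- grid cells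
  set cell : X → (Fin d → ℤ) := fun y i => if (i:ℕ) < m then ⌊T y (i:ℕ) / mu⌋ else 0
    with hcell_def
  set rep : (Fin d → ℤ) → X := fun v => if h : ∃ y, y ∈ V' ∧ cell y = v then h.choose else p₀
    with hrep_def
  have hrep : ∀ x, x ∈ V' → rep (cell x) ∈ V' ∧ cell (rep (cell x)) = cell x := by
    intro x hx
    have h : ∃ y, y ∈ V' ∧ cell y = cell x := ⟨x, hx, rfl⟩
    rw [hrep_def]
    simp only [dif_pos h]
    exact h.choose_spec
  set S₁ : Finset X := V'.image (fun x => rep (cell x)) with hS₁_def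
  set S : Finset X := insert p₀ (((Finset.range m).image q) ∪ S₁) with hS_def
  -- center
  set Q : ℕ → X := fun j => if j < m then q j else p₀ with hQ_def
  have hQV : ∀ j, Q j ∈ V' := by
    intro j
    rw [hQ_def]
    by_cases h : j < m
    · simp only [if_pos h]; exact (hqV j h).1
    · simp only [if_neg h]; exact hp₀
  have hQS : ∀ j, Q j ∈ S := by
    intro j
    rw [hQ_def, hS_def]
    by_cases h : j < m
    · simp only [if_pos h]
      exact Finset.mem_insert.2 (Or.inr (Finset.mem_union_left _
        (Finset.mem_image.2 ⟨j, Finset.mem_range.2 h, rfl⟩)))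
    · simp only [if_neg h]; exact Finset.mem_insert_self _ _
  set c : X := (((m:ℝ)+1)⁻¹) • ∑ j ∈ Finset.range (m+1), Q j with hc_def
  have hcmass : c = (Finset.range (m+1)).centerMass (fun _ => (1:ℝ)) Q := by
    rw [Finset.centerMass, hc_def]
    simp [Finset.sum_const, Finset.card_range]
  have hcP : c ∈ P := by
    rw [← hPE, hcmass]
    exact Finset.centerMass_mem_convexHull _ (fun i _ => zero_le_one)
      (by simp; positivity) (fun j _ => Finset.mem_coe.2 (hQV j))
  have hcS : c ∈ convexHull ℝ (S : Set X) := by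
    rw [hcmass]
    exact Finset.centerMass_mem_convexHull _ (fun i _ => zero_le_one)
      (by simp; positivity) (fun j _ => Finset.mem_coe.2 (hQS j))
  -- main pointwise claim
  have key : ∀ x, x ∈ V' → ∃ w ∈ convexHull ℝ (S : Set X), c + (1+ε) • (w - c) = x := by
    intro x hx
    set sx : X := rep (cell x) with hsx_def
    have hsxV : sx ∈ V' := (hrep x hx).1
    have hsxcell : cell sx = cell x := (hrep x hx).2
    have hsxS : sx ∈ S := by
      rw [hS_def]
      exact Finset.mem_insert.2 (Or.inr (Finset.mem_union_right _
        (Finset.mem_image.2 ⟨x, hx, rfl⟩)))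
    set dl : ℕ → ℝ := fun i => (T x i - T sx i)/ε with hdl_def
    have hdlb : ∀ i, i < m → |dl i| ≤ mu/ε := by
      intro i hi
      have hid : i < d := lt_of_lt_of_le hi hmd'
      have hfl : ⌊T sx i / mu⌋ = ⌊T x i / mu⌋ := by
        have := congrFun hsxcell ⟨i, hid⟩
        simp only [hcell_def] at this
        simpa [if_pos hi] using this
      have h1 : |T x i / mu - T sx i / mu| < 1 := abs_sub_lt_one_of_floor_eq hfl.symm
      have h2 : |T x i - T sx i| < mu := by
        rw [div_sub_div_same, abs_div, abs_of_pos hmu, div_lt_one hmu] at h1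
        exact h1
      rw [hdl_def]
      simp only [abs_div, abs_of_pos hε]
      gcongr
    have hdlsum : |∑ i ∈ Finset.range m, dl i| ≤ (m:ℝ) * (mu/ε) := by
      calc |∑ i ∈ Finset.range m, dl i| ≤ ∑ i ∈ Finset.range m, |dl i| :=
            Finset.abs_sum_le_sum_abs _ _
        _ ≤ ∑ i ∈ Finset.range m, (mu/ε) :=
            Finset.sum_le_sum (fun i hi => hdlb i (Finset.mem_range.1 hi))
        _ = (m:ℝ) * (mu/ε) := by simp
    have hratio : mu/ε = ((2*(d:ℝ)+2)*((d:ℝ)+1))⁻¹ := by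
      rw [hmu_def]
      field_simp
    set z : X := c + ε⁻¹ • (x - sx) with hz_def
    set β : ℕ → ℝ := fun j => ((m:ℝ)+1)⁻¹ +
      (if j < m then dl j else -(∑ i ∈ Finset.range m, dl i)) with hβ_def
    have hβsum : ∑ j ∈ Finset.range (m+1), β j = 1 := by
      rw [Finset.sum_range_succ]
      have e1 : ∀ j ∈ Finset.range m, β j = ((m:ℝ)+1)⁻¹ + dl j := by
        intro j hj
        rw [hβ_def]
        simp only [if_pos (Finset.mem_range.1 hj)]
      rw [Finset.sum_congr rfl e1, Finset.sum_add_distrib, Finset.sum_const,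
        Finset.card_range, nsmul_eq_mul]
      rw [hβ_def]
      simp only [lt_irrefl, if_neg (lt_irrefl m), ↓reduceIte]
      have hm1 : ((m:ℝ)+1) ≠ 0 := by positivity
      field_simp
      ring
    have hmine : mu/ε ≤ ((m:ℝ)+1)⁻¹ := by
      rw [hratio]
      have hdm0 : (m:ℝ) ≤ (d:ℝ) := Nat.cast_le.2 hmd'
      exact inv_anti₀ (by positivity) (by nlinarith)
    have hmine2 : (m:ℝ) * (mu/ε) ≤ ((m:ℝ)+1)⁻¹ := by
      rw [hratio]
      have hdm : (m:ℝ) ≤ (d:ℝ) := Nat.cast_le.2 hmd'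
      rw [← div_eq_mul_inv, ← one_div, div_le_div_iff₀ (by positivity) (by positivity)]
      nlinarith
    have hβ0 : ∀ j ∈ Finset.range (m+1), 0 ≤ β j := by
      intro j hj
      rw [hβ_def]
      by_cases h : j < m
      · simp only [if_pos h]
        have := hdlb j h
        have h2 := neg_le_of_abs_le this
        linarith
      · simp only [if_neg h]
        have h2 := le_of_abs_le hdlsum
        linarith
    -- the algebraic identity
    have hxT := (hT x hx).1
    have hsT := (hT sx hsxV).1
    have hdlu : ∑ j ∈ Finset.range m, dl j • u j = ε⁻¹ • (x - sx) := by
      have e1 : ∀ j ∈ Finset.range m, dl j • u j = ε⁻¹ • (T x j • u j - T sx j • u j) := by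
        intro j hj
        rw [hdl_def]
        simp only
        rw [div_eq_mul_inv, mul_comm, ← smul_smul, sub_smul]
      rw [Finset.sum_congr rfl e1, ← Finset.smul_sum, Finset.sum_sub_distrib,
        ← hxT, ← hsT, sub_sub_sub_cancel_right]
    have hβQ : ∑ j ∈ Finset.range (m+1), β j • Q j = z := by
      rw [Finset.sum_range_succ]
      have e2 : ∀ j ∈ Finset.range m, β j • Q j =
          (((m:ℝ)+1)⁻¹) • q j + (dl j • u j + dl j • p₀) := by
        intro j hj
        have hjm := Finset.mem_range.1 hj
        have hQq : Q j = q j := by rw [hQ_def]; simp only [if_pos hjm]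
        have huq : u j = q j - p₀ := ((hqV j hjm).2).symm
        rw [hQq, hβ_def]
        simp only [if_pos hjm]
        rw [add_smul, huq, smul_sub]
        abel
      have hQm : Q m = p₀ := by rw [hQ_def]; simp only [if_neg (lt_irrefl m)]
      have hβm : β m = ((m:ℝ)+1)⁻¹ - ∑ i ∈ Finset.range m, dl i := by
        rw [hβ_def]
        simp only [if_neg (lt_irrefl m)]
        ring
      rw [Finset.sum_congr rfl e2, hQm, hβm]
      rw [Finset.sum_add_distrib, Finset.sum_add_distrib, hdlu]
      have hsc : ∑ j ∈ Finset.range m, dl j • p₀ = (∑ i ∈ Finset.range m, dl i) • p₀ := by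
        rw [Finset.sum_smul]
      rw [hsc]
      have hc2 : c = (((m:ℝ)+1)⁻¹) • ((∑ j ∈ Finset.range m, q j) + p₀) := by
        rw [hc_def, Finset.sum_range_succ]
        have h5 : ∑ j ∈ Finset.range m, Q j = ∑ j ∈ Finset.range m, q j :=
          Finset.sum_congr rfl (fun j hj => by
            rw [hQ_def]; simp only [if_pos (Finset.mem_range.1 hj)])
        have h6 : Q m = p₀ := by rw [hQ_def]; simp only [if_neg (lt_irrefl m)]
        rw [h5, h6]
      rw [hz_def, hc2, smul_add, sub_smul, Finset.smul_sum]
      abel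
    have hzmass : z = (Finset.range (m+1)).centerMass β Q := by
      rw [Finset.centerMass, hβsum, hβQ]
      simp
    have hzS : z ∈ convexHull ℝ (S : Set X) := by
      rw [hzmass]
      exact Finset.centerMass_mem_convexHull _ hβ0 (by rw [hβsum]; exact one_pos)
        (fun j _ => Finset.mem_coe.2 (hQS j))
    set w : X := (1+ε)⁻¹ • (x + ε • c) with hw_def
    have h1ε : (1+ε) ≠ 0 := by positivity
    have hwz : w = (1+ε)⁻¹ • sx + (ε * (1+ε)⁻¹) • z := by
      have hez : ε • z = ε • c + (x - sx) := by
        rw [hz_def, smul_add]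
        congr 1
        rw [smul_smul, mul_inv_cancel₀ hε.ne', one_smul]
      rw [hw_def]
      have : (ε * (1+ε)⁻¹) • z = (1+ε)⁻¹ • (ε • z) := by
        rw [smul_smul, mul_comm]
      rw [this, hez, ← smul_add]
      congr 1
      abel
    have hwS : w ∈ convexHull ℝ (S : Set X) := by
      rw [hwz]
      refine (convex_convexHull ℝ (S : Set X)) (subset_convexHull ℝ _ hsxS) hzS
        (by positivity) (by positivity) ?_
      field_simp
    refine ⟨w, hwS, ?_⟩
    rw [hw_def, smul_sub, smul_smul, mul_inv_cancel₀ h1ε, one_smul]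
    module
  refine ⟨c, hcP, S, ?_, ?_, ?_⟩
  · -- S consists of extreme points
    rw [← hV'E]
    intro y hy
    rw [Finset.mem_coe, hS_def] at hy
    rcases Finset.mem_insert.1 hy with h | h
    · rw [h]; exact hp₀
    · rcases Finset.mem_union.1 h with h | h
      · obtain ⟨j, hj, rfl⟩ := Finset.mem_image.1 h
        exact (hqV j (Finset.mem_range.1 hj)).1
      · obtain ⟨x, hx, rfl⟩ := Finset.mem_image.1 h
        exact (hrep x hx).1
  · -- cardinality
    have h1 : S₁ = (V'.image cell).image rep := by
      rw [hS₁_def, Finset.image_image]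
      rfl
    have h2 : S₁.card ≤ (V'.image cell).card := by
      rw [h1]; exact Finset.card_image_le
    have h3 : V'.image cell ⊆ Finset.Icc (fun _ : Fin d => -b) (fun _ : Fin d => b) := by
      intro v hv
      obtain ⟨x, hx, rfl⟩ := Finset.mem_image.1 hv
      rw [Finset.mem_Icc, Pi.le_def, Pi.le_def]
      constructor <;> intro i <;> simp only [hcell_def] <;> by_cases h : (i:ℕ) < m
      · simp only [if_pos h]
        rw [Int.le_floor]
        push_cast
        have hTb := (hT x hx).2 (i:ℕ) h
        have h1 : -M ≤ T x (i:ℕ) := neg_le_of_abs_le hTb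
        calc -(b:ℝ) ≤ -(M/mu) := neg_le_neg (Int.le_ceil _)
          _ = (-M)/mu := (neg_div _ _).symm
          _ ≤ T x (i:ℕ) / mu := by gcongr
      · simp only [if_neg h]
        omega
      · simp only [if_pos h]
        have hTb := (hT x hx).2 (i:ℕ) h
        calc ⌊T x (i:ℕ) / mu⌋ ≤ ⌊M / mu⌋ := by
              apply Int.floor_le_floor
              have h1 : T x (i:ℕ) ≤ M := le_of_abs_le hTb
              gcongr
          _ ≤ b := Int.floor_le_ceil _
      · simp only [if_neg h]
        exact hb0
    have h4 : S₁.card ≤ (Finset.Icc (fun _ : Fin d => -b) (fun _ : Fin d => b)).card :=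
      h2.trans (Finset.card_le_card h3)
    calc S.card ≤ (((Finset.range m).image q) ∪ S₁).card + 1 := by
          rw [hS_def]; exact Finset.card_insert_le _ _
      _ ≤ ((Finset.range m).image q).card + S₁.card + 1 := by
          have := Finset.card_union_le ((Finset.range m).image q) S₁
          omega
      _ ≤ m + S₁.card + 1 := by
          have := Finset.card_image_le (s := Finset.range m) (f := q)
          rw [Finset.card_range] at this
          omega
      _ ≤ (Finset.Icc (fun _ : Fin d => -b) (fun _ : Fin d => b)).card + (d+1) := by omega
  · -- inclusion
    set f : (EuclideanSpace ℝ (Fin d)) →ᵃ[ℝ] (EuclideanSpace ℝ (Fin d)) :=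
      AffineMap.homothety c (1+ε) with hf_def
    have hfa : ∀ p : X, f p = c + (1+ε) • (p - c) := by
      intro p
      rw [hf_def]
      simp only [AffineMap.homothety_apply, vsub_eq_sub, vadd_eq_add]
      abel
    have himg : (fun v => c + (1+ε) • (v - c)) '' (S : Set X) = f '' (S : Set X) :=
      Set.image_congr (fun p _ => (hfa p).symm)
    rw [himg, ← AffineMap.image_convexHull, ← hPE]
    apply convexHull_min
    · intro x hx
      obtain ⟨w, hw, hwx⟩ := key x (Finset.mem_coe.1 hx)
      exact ⟨w, hw, by rw [hfa w]; exact hwx⟩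
    · rw [AffineMap.image_convexHull]
      exact convex_convexHull ℝ _
end

section
/- Let P be a convex polytope in R^d with m vertices, and for each vertex v of P let C_v be an axis-parallel hypercube of side length g containing v, with P'' = conv(⋃_v vertices(C_v)). Then the length of a shortest closed tour of the vertices of P'' is at most the length of a shortest closed tour of the vertices of P plus m·g·√d·(2^d + 1). -/
/-- The length of the closed polygonal tour through `t 0, t 1, …, t (k-1)` in cyclic
order. -/
noncomputable def tourLength {d k : ℕ} (t : Fin k → EuclideanSpace ℝ (Fin d)) : ℝ :=
  ∑ i, dist (t i) (t (finRotate k i))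

/-- The set of lengths of closed polygonal tours visiting all points of `X`. -/
def tourLengths {d : ℕ} (X : Set (EuclideanSpace ℝ (Fin d))) : Set ℝ :=
  {L | ∃ (k : ℕ) (t : Fin k → EuclideanSpace ℝ (Fin d)),
    X ⊆ Set.range t ∧ tourLength t = L}

/-- The set of the `2^d` corners of the axis-parallel hypercube with lower corner `x`
and side length `g`. -/
def cubeCorners {d : ℕ} (x : EuclideanSpace ℝ (Fin d)) (g : ℝ) :
    Set (EuclideanSpace ℝ (Fin d)) :=
  {y | ∀ i, y i = x i ∨ y i = x i + g}

/-- Membership in the axis-parallel hypercube with lower corner `x` and side length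
`g`. -/
def inCube {d : ℕ} (x v : EuclideanSpace ℝ (Fin d)) (g : ℝ) : Prop :=
  ∀ i, x i ≤ v i ∧ v i ≤ x i + g

section Aux

variable {d : ℕ}

lemma tourLength_nonneg {k : ℕ} (t : Fin k → EuclideanSpace ℝ (Fin d)) :
    0 ≤ tourLength t :=
  Finset.sum_nonneg fun _ _ => dist_nonneg

lemma tourLength_rotate {k : ℕ} (t : Fin (k+1) → EuclideanSpace ℝ (Fin d)) (i0 : Fin (k+1)) :
    tourLength (fun q => t (q + i0)) = tourLength t := by
  unfold tourLength
  simp only [finRotate_succ_apply]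
  exact Fintype.sum_equiv (Equiv.addRight i0) _ _ (fun q => by
    simp only [Equiv.coe_addRight]
    rw [add_right_comm])

lemma tourLength_le {k : ℕ} (t : Fin k → EuclideanSpace ℝ (Fin d)) (B : ℝ)
    (h : ∀ i j, dist (t i) (t j) ≤ B) :
    tourLength t ≤ k * B := by
  unfold tourLength
  calc ∑ i, dist (t i) (t (finRotate k i)) ≤ ∑ _i : Fin k, B :=
        Finset.sum_le_sum fun i _ => h _ _
    _ = k * B := by simp [Finset.sum_const, nsmul_eq_mul]

lemma tourLength_append {m n : ℕ} (t : Fin (m+1) → EuclideanSpace ℝ (Fin d))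
    (c : Fin (n+1) → EuclideanSpace ℝ (Fin d)) :
    tourLength (Fin.append t c) ≤ tourLength t + tourLength c + 2 * dist (t 0) (c 0) := by
  haveI : NeZero (m+1+(n+1)) := ⟨by omega⟩
  have hrot : ∀ q : Fin (m+1+(n+1)), finRotate _ q = q + 1 := fun q =>
    finRotate_succ_apply (n := m+1+n) q
  have e1 : ∀ i : Fin m, Fin.append t c (Fin.castAdd (n+1) i.castSucc + 1) = t (i.castSucc + 1) := by
    intro i
    have hi := i.isLt
    have h : Fin.castAdd (n+1) i.castSucc + 1 = Fin.castAdd (n+1) (i.castSucc + 1) := by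
      apply Fin.ext
      rw [Fin.val_add_one_of_lt (n := m+1+n) (by simp only [Fin.lt_def, Fin.coe_castAdd,
        Fin.coe_castSucc, Fin.coe_natAdd, Fin.val_last]; omega)]
      rw [Fin.coe_castAdd, Fin.coe_castAdd,
        Fin.val_add_one_of_lt (n := m) (by simp only [Fin.lt_def, Fin.coe_castAdd,
          Fin.coe_castSucc, Fin.coe_natAdd, Fin.val_last]; omega)]
    rw [h, Fin.append_left]
  have e2 : Fin.append t c (Fin.castAdd (n+1) (Fin.last m) + 1) = c 0 := by
    have h : Fin.castAdd (n+1) (Fin.last m) + 1 = Fin.natAdd (m+1) (0 : Fin (n+1)) := by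
      apply Fin.ext
      rw [Fin.val_add_one_of_lt (n := m+1+n) (by simp only [Fin.lt_def, Fin.coe_castAdd,
        Fin.coe_castSucc, Fin.coe_natAdd, Fin.val_last]; omega)]
      simp
    rw [h, Fin.append_right]
  have e3 : ∀ j : Fin n, Fin.append t c (Fin.natAdd (m+1) j.castSucc + 1) = c (j.castSucc + 1) := by
    intro j
    have hj := j.isLt
    have h : Fin.natAdd (m+1) j.castSucc + 1 = Fin.natAdd (m+1) (j.castSucc + 1) := by
      apply Fin.ext
      rw [Fin.val_add_one_of_lt (n := m+1+n) (by simp only [Fin.lt_def, Fin.coe_castAdd,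
        Fin.coe_castSucc, Fin.coe_natAdd, Fin.val_last]; omega)]
      rw [Fin.coe_natAdd, Fin.coe_natAdd,
        Fin.val_add_one_of_lt (n := n) (by simp only [Fin.lt_def, Fin.coe_castAdd,
          Fin.coe_castSucc, Fin.coe_natAdd, Fin.val_last]; omega)]
      omega
    rw [h, Fin.append_right]
  have e4 : Fin.append t c (Fin.natAdd (m+1) (Fin.last n) + 1) = t 0 := by
    have h0 : Fin.natAdd (m+1) (Fin.last n) = Fin.last (m+1+n) := by
      apply Fin.ext; simp
    have h : Fin.natAdd (m+1) (Fin.last n) + 1 = Fin.castAdd (n+1) (0 : Fin (m+1)) := by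
      rw [h0]
      rw [Fin.last_add_one (m+1+n)]
      apply Fin.ext; simp
    rw [h, Fin.append_left]
  have expand : tourLength (Fin.append t c) =
      ((∑ i : Fin m, dist (t i.castSucc) (t (i.castSucc + 1))) + dist (t (Fin.last m)) (c 0))
      + ((∑ j : Fin n, dist (c j.castSucc) (c (j.castSucc + 1))) + dist (c (Fin.last n)) (t 0)) := by
    unfold tourLength
    simp only [hrot]
    rw [Fin.sum_univ_add]
    congr 1
    · rw [Fin.sum_univ_castSucc]
      congr 1
      · exact Finset.sum_congr rfl fun i _ => by rw [Fin.append_left, e1]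
      · rw [Fin.append_left, e2]
    · rw [Fin.sum_univ_castSucc]
      congr 1
      · exact Finset.sum_congr rfl fun j _ => by rw [Fin.append_right, e3]
      · rw [Fin.append_right, e4]
  have hT : tourLength t =
      (∑ i : Fin m, dist (t i.castSucc) (t (i.castSucc + 1))) + dist (t (Fin.last m)) (t 0) := by
    unfold tourLength
    simp only [finRotate_succ_apply]
    rw [Fin.sum_univ_castSucc, Fin.last_add_one]
  have hC : tourLength c =
      (∑ j : Fin n, dist (c j.castSucc) (c (j.castSucc + 1))) + dist (c (Fin.last n)) (c 0) := by
    unfold tourLength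
    simp only [finRotate_succ_apply]
    rw [Fin.sum_univ_castSucc, Fin.last_add_one]
  have tri1 : dist (t (Fin.last m)) (c 0) ≤ dist (t (Fin.last m)) (t 0) + dist (t 0) (c 0) :=
    dist_triangle _ _ _
  have tri2 : dist (c (Fin.last n)) (t 0) ≤ dist (c (Fin.last n)) (c 0) + dist (c 0) (t 0) :=
    dist_triangle _ _ _
  have hd : dist (c 0) (t 0) = dist (t 0) (c 0) := dist_comm _ _
  rw [expand, hT, hC]
  linarith

lemma insert_loop {k N : ℕ} (t : Fin (k+1) → EuclideanSpace ℝ (Fin d))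
    (c : Fin (N+1) → EuclideanSpace ℝ (Fin d)) (hc0 : c 0 ∈ Set.range t) :
    ∃ t' : Fin (k+1+(N+1)) → EuclideanSpace ℝ (Fin d),
      Set.range t ∪ Set.range c ⊆ Set.range t' ∧
      tourLength t' ≤ tourLength t + tourLength c := by
  obtain ⟨i0, hi0⟩ := hc0
  refine ⟨Fin.append (fun q => t (q + i0)) c, ?_, ?_⟩
  · rintro x (⟨i, rfl⟩ | ⟨j, rfl⟩)
    · refine ⟨Fin.castAdd (N+1) (i - i0), ?_⟩
      rw [Fin.append_left]
      show t (i - i0 + i0) = t i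
      rw [sub_add_cancel]
    · exact ⟨Fin.natAdd (k+1) j, by rw [Fin.append_right]⟩
  · have h0 : (fun q : Fin (k+1) => t (q + i0)) 0 = c 0 := by
      show t (0 + i0) = c 0
      rw [zero_add, hi0]
    calc tourLength (Fin.append (fun q => t (q + i0)) c)
        ≤ tourLength (fun q : Fin (k+1) => t (q + i0)) + tourLength c
          + 2 * dist ((fun q : Fin (k+1) => t (q + i0)) 0) (c 0) := tourLength_append _ _
      _ = tourLength t + tourLength c := by
          rw [h0, dist_self, tourLength_rotate]; ring

lemma dist_le_of_inCube {x p q : EuclideanSpace ℝ (Fin d)} {g : ℝ} (hg : 0 ≤ g)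
    (hp : inCube x p g) (hq : inCube x q g) : dist p q ≤ g * Real.sqrt d := by
  rw [EuclideanSpace.dist_eq]
  have h1 : ∀ i, dist (p i) (q i) ^ 2 ≤ g ^ 2 := by
    intro i
    obtain ⟨h1, h2⟩ := hp i
    obtain ⟨h3, h4⟩ := hq i
    rw [Real.dist_eq]
    have habs : |p i - q i| ≤ g := abs_sub_le_iff.2 ⟨by linarith, by linarith⟩
    exact pow_le_pow_left₀ (abs_nonneg _) habs 2
  have h2 : (∑ i, dist (p i) (q i) ^ 2) ≤ (g * Real.sqrt d) ^ 2 := by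
    have h : (g * Real.sqrt d) ^ 2 = d * g ^ 2 := by
      rw [mul_pow, Real.sq_sqrt (Nat.cast_nonneg d)]; ring
    rw [h]
    calc (∑ i, dist (p i) (q i) ^ 2) ≤ ∑ _i : Fin d, g ^ 2 :=
          Finset.sum_le_sum fun i _ => h1 i
      _ = d * g ^ 2 := by simp [Finset.sum_const, nsmul_eq_mul]
  calc Real.sqrt (∑ i, dist (p i) (q i) ^ 2) ≤ Real.sqrt ((g * Real.sqrt d) ^ 2) :=
        Real.sqrt_le_sqrt h2
    _ = g * Real.sqrt d := Real.sqrt_sq (by positivity)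

noncomputable def cornerEquiv (d : ℕ) : (Fin d → Bool) ≃ Fin (2^d) :=
  Fintype.equivFinOfCardEq (by simp)

noncomputable def corn (x : EuclideanSpace ℝ (Fin d)) (g : ℝ) (j : Fin (2^d)) :
    EuclideanSpace ℝ (Fin d) :=
  WithLp.toLp 2 (fun i => x i + (if (cornerEquiv d).symm j i then g else 0))

lemma corn_inCube (x : EuclideanSpace ℝ (Fin d)) {g : ℝ} (hg : 0 ≤ g) (j : Fin (2^d)) :
    inCube x (corn x g j) g := by
  intro i
  show x i ≤ x i + _ ∧ x i + _ ≤ x i + g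
  split <;> constructor <;> linarith

lemma cubeCorners_subset_range (x : EuclideanSpace ℝ (Fin d)) (g : ℝ) :
    cubeCorners x g ⊆ Set.range (corn x g) := by
  classical
  intro y hy
  refine ⟨cornerEquiv d (fun i => if y i = x i then false else true), ?_⟩
  refine PiLp.ext fun i => ?_
  show x i + _ = y i
  rw [Equiv.symm_apply_apply]
  rcases hy i with h | h
  · simp [h]
  · by_cases hc : y i = x i
    · simp [hc]
    · simp only [hc, if_false, if_true]
      exact h.symm

end Aux

/-- If `P` is a convex polytope with `m` vertices, each vertex `v` lies in an
axis-parallel hypercube `C_v` of side length `g`, and `P''` is the convex hull of the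
corners of all these hypercubes, then the shortest closed tour of the vertices of `P''`
is at most the shortest closed tour of the vertices of `P` plus `m·g·√d·(2^d + 1)`. -/
theorem stmt16 {d : ℕ} (V : Finset (EuclideanSpace ℝ (Fin d)))
    (P : Set (EuclideanSpace ℝ (Fin d)))
    (hP : P = convexHull ℝ (V : Set (EuclideanSpace ℝ (Fin d))))
    (m : ℕ) (hm : (P.extremePoints ℝ).ncard = m)
    (g : ℝ) (hg : 0 ≤ g) (a : EuclideanSpace ℝ (Fin d) → EuclideanSpace ℝ (Fin d))
    (ha : ∀ v ∈ P.extremePoints ℝ, inCube (a v) v g)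
    (P'' : Set (EuclideanSpace ℝ (Fin d)))
    (hP'' : P'' = convexHull ℝ (⋃ v ∈ P.extremePoints ℝ, cubeCorners (a v) g)) :
    sInf (tourLengths (P''.extremePoints ℝ)) ≤
      sInf (tourLengths (P.extremePoints ℝ)) + m * g * Real.sqrt d * (2 ^ d + 1) := by
  classical
  set S := P.extremePoints ℝ with hS
  set C : ℝ := m * g * Real.sqrt d * (2 ^ d + 1) with hCdef
  have hC0 : 0 ≤ C := by
    have := Real.sqrt_nonneg (d : ℝ)
    have h2 : (0:ℝ) ≤ 2 ^ d + 1 := by positivity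
    positivity
  have hSV : S ⊆ (V : Set (EuclideanSpace ℝ (Fin d))) := by
    rw [hS, hP]; exact extremePoints_convexHull_subset
  have hSfin : S.Finite := V.finite_toSet.subset hSV
  -- per-vertex loop tour
  have hloop : ∀ v ∈ S, ∃ c : Fin (2^d+1) → EuclideanSpace ℝ (Fin d),
      c 0 = v ∧ cubeCorners (a v) g ⊆ Set.range c ∧
      tourLength c ≤ (2^d+1 : ℝ) * (g * Real.sqrt d) := by
    intro v hv
    set cc : Fin (2^d+1) → EuclideanSpace ℝ (Fin d) := Fin.cons v (corn (a v) g) with hcc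
    refine ⟨cc, Fin.cons_zero _ _, ?_, ?_⟩
    · intro y hy
      obtain ⟨j, rfl⟩ := cubeCorners_subset_range (a v) g hy
      exact ⟨j.succ, Fin.cons_succ _ _ _⟩
    · have hall : ∀ i : Fin (2^d+1), inCube (a v) (cc i) g := by
        intro i
        refine Fin.cases ?_ ?_ i
        · rw [hcc, Fin.cons_zero]
          exact ha v hv
        · intro j
          rw [hcc, Fin.cons_succ]
          exact corn_inCube _ hg j
      calc tourLength cc
          ≤ ((2^d+1 : ℕ) : ℝ) * (g * Real.sqrt d) :=
            tourLength_le _ _ (fun i j => dist_le_of_inCube hg (hall i) (hall j))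
        _ = (2^d+1 : ℝ) * (g * Real.sqrt d) := by push_cast; ring
  -- main induction: insert loops at all vertices of F
  have main : ∀ F : Finset (EuclideanSpace ℝ (Fin d)), (↑F ⊆ S) →
      ∀ (k : ℕ) (t : Fin (k+1) → EuclideanSpace ℝ (Fin d)), S ⊆ Set.range t →
      ∃ (k' : ℕ) (t' : Fin (k'+1) → EuclideanSpace ℝ (Fin d)),
        (Set.range t ∪ ⋃ v ∈ F, cubeCorners (a v) g) ⊆ Set.range t' ∧
        tourLength t' ≤ tourLength t + F.card * ((2^d+1 : ℝ) * (g * Real.sqrt d)) := by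
    intro F
    induction F using Finset.induction_on with
    | empty =>
      intro _ k t ht
      exact ⟨k, t, by simp, by simp⟩
    | @insert v F hvF ih =>
      intro hins k t ht
      have hvS : v ∈ S := hins (Finset.mem_insert_self v F)
      have hFS : (↑F : Set (EuclideanSpace ℝ (Fin d))) ⊆ S :=
        fun x hx => hins (Finset.mem_insert_of_mem hx)
      obtain ⟨k', t', hcov, hlen⟩ := ih hFS k t ht
      obtain ⟨c, hc0, hccov, hclen⟩ := hloop v hvS
      have hc0r : c 0 ∈ Set.range t' := by
        rw [hc0]; exact hcov (Or.inl (ht hvS))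
      obtain ⟨t'', hcov'', hlen''⟩ := insert_loop t' c hc0r
      refine ⟨k'+1+2^d, t'', ?_, ?_⟩
      · rintro x (hx | hx)
        · exact hcov'' (Or.inl (hcov (Or.inl hx)))
        · simp only [Set.mem_iUnion, exists_prop] at hx
          obtain ⟨w, hw, hxw⟩ := hx
          rcases Finset.mem_insert.1 hw with rfl | hw
          · exact hcov'' (Or.inr (hccov hxw))
          · refine hcov'' (Or.inl (hcov (Or.inr ?_)))
            exact Set.mem_biUnion hw hxw
      · have hcard : (insert v F).card = F.card + 1 := Finset.card_insert_of_notMem hvF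
        rw [hcard]
        push_cast
        calc tourLength t'' ≤ tourLength t' + tourLength c := hlen''
          _ ≤ tourLength t + F.card * ((2^d+1 : ℝ) * (g * Real.sqrt d))
              + (2^d+1 : ℝ) * (g * Real.sqrt d) := add_le_add hlen hclen
          _ = tourLength t + ((F.card : ℝ) + 1) * ((2^d+1 : ℝ) * (g * Real.sqrt d)) := by ring
  -- extreme points of P'' are covered by the cube corners
  have hcorn : P''.extremePoints ℝ ⊆ ⋃ v ∈ S, cubeCorners (a v) g := by
    rw [hP'']; exact extremePoints_convexHull_subset
  -- key: from any tour of S, get a tour of P''.extremePoints with controlled length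
  have key : ∀ L ∈ tourLengths S, ∃ L' ∈ tourLengths (P''.extremePoints ℝ), L' ≤ L + C := by
    rintro L ⟨k, t, hcov, rfl⟩
    rcases k with _ | k
    · -- empty tour: S = ∅
      have hSe : S = ∅ := by
        have : Set.range t = ∅ := Set.range_eq_empty t
        exact Set.subset_eq_empty hcov this
      refine ⟨tourLength t, ⟨0, t, ?_, rfl⟩, by linarith [tourLength_nonneg t]⟩
      intro x hx
      exfalso
      have := hcorn hx
      rw [hSe] at this
      simpa using this
    · obtain ⟨k', t', hcov', hlen'⟩ := main hSfin.toFinset (by rw [hSfin.coe_toFinset]) k t hcov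
      refine ⟨tourLength t', ⟨k'+1, t', ?_, rfl⟩, ?_⟩
      · intro x hx
        obtain ⟨w, hwS, hxw⟩ := Set.mem_iUnion₂.1 (hcorn hx)
        refine hcov' (Or.inr ?_)
        exact Set.mem_biUnion (hSfin.mem_toFinset.2 hwS) hxw
      · have hFcard : (hSfin.toFinset.card : ℝ) = (m : ℝ) := by
          rw [Set.ncard_eq_toFinset_card S hSfin] at hm
          exact_mod_cast congrArg Nat.cast hm
        calc tourLength t' ≤ tourLength t
              + hSfin.toFinset.card * ((2^d+1 : ℝ) * (g * Real.sqrt d)) := hlen'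
          _ = tourLength t + C := by rw [hFcard, hCdef]; ring
  have hBne : (tourLengths S).Nonempty := by
    refine ⟨tourLength (fun i : Fin (Fintype.card V) => ((Fintype.equivFin V).symm i : EuclideanSpace ℝ (Fin d))),
      Fintype.card V, _, ?_, rfl⟩
    intro x hx
    exact ⟨Fintype.equivFin V ⟨x, hSV hx⟩, by simp⟩
  have hAbdd : BddBelow (tourLengths (P''.extremePoints ℝ)) := by
    refine ⟨0, ?_⟩
    rintro L ⟨k, t, -, rfl⟩
    exact tourLength_nonneg t
  have h1 : sInf (tourLengths (P''.extremePoints ℝ)) - C ≤ sInf (tourLengths S) := by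
    apply le_csInf hBne
    intro L hL
    obtain ⟨L', hL'A, hle⟩ := key L hL
    have := csInf_le hAbdd hL'A
    linarith
  linarith
end

section
/- Let P be a convex polytope in R^d, n a nonzero vector, and v a vertex of P that does not maximize the linear functional x ↦ ⟨x, n⟩ over P. Then there exists a vertex w of P adjacent to v (i.e., the segment [v,w] is an edge, a 1-dimensional face, of P) with ⟨w, n⟩ > ⟨v, n⟩. -/
open scoped RealInnerProductSpace

variable {d : ℕ}

private lemma innerLin (c : EuclideanSpace ℝ (Fin d)) :
    IsLinearMap ℝ (fun x : EuclideanSpace ℝ (Fin d) => ⟪x, c⟫) :=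
  ⟨fun a b => inner_add_left a b c, fun r a => real_inner_smul_left a c r⟩

/-- inner products bounded on a finite set are bounded on its hull -/
private lemma inner_le_of_mem_hull {S : Finset (EuclideanSpace ℝ (Fin d))}
    {c : EuclideanSpace ℝ (Fin d)} {M : ℝ} (h : ∀ x ∈ S, ⟪x, c⟫ ≤ M)
    {x : EuclideanSpace ℝ (Fin d)}
    (hx : x ∈ convexHull ℝ (S : Set (EuclideanSpace ℝ (Fin d)))) : ⟪x, c⟫ ≤ M :=
  convexHull_min h (convex_halfSpace_le (innerLin c) M) hx

private lemma dense_inner_ne {z : EuclideanSpace ℝ (Fin d)} (hz : z ≠ 0) :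
    Dense {c : EuclideanSpace ℝ (Fin d) | ⟪z, c⟫ ≠ 0} := by
  rw [Metric.dense_iff]
  intro x r hr
  by_cases h : ⟪z, x⟫ = 0
  · refine ⟨x + (r / (2 * ‖z‖)) • z, ?_, ?_⟩
    · rw [Metric.mem_ball, dist_eq_norm]
      have hz' : 0 < ‖z‖ := norm_pos_iff.mpr hz
      have : x + (r / (2 * ‖z‖)) • z - x = (r / (2 * ‖z‖)) • z := by abel
      rw [this, norm_smul]
      simp only [Real.norm_eq_abs]
      rw [abs_of_pos (by positivity)]
      have h2 : r / (2 * ‖z‖) * ‖z‖ = r / 2 := by field_simp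
      rw [h2]; linarith
    · simp only [Set.mem_setOf_eq, inner_add_right, h, real_inner_smul_right, zero_add]
      have hz' : 0 < ‖z‖ := norm_pos_iff.mpr hz
      have : ⟪z, z⟫ ≠ 0 := by
        rw [real_inner_self_eq_norm_sq]; positivity
      positivity
  · exact ⟨x, Metric.mem_ball_self hr, h⟩

private lemma face_eq {S : Finset (EuclideanSpace ℝ (Fin d))}
    {c : EuclideanSpace ℝ (Fin d)} {M : ℝ}
    (hub : ∀ x ∈ S, ⟪x, c⟫ ≤ M) (hmem : ∃ x ∈ S, ⟪x, c⟫ = M) :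
    {x ∈ convexHull ℝ (S : Set (EuclideanSpace ℝ (Fin d))) |
        ∀ y ∈ convexHull ℝ (S : Set (EuclideanSpace ℝ (Fin d))), ⟪y, c⟫ ≤ ⟪x, c⟫}
      = convexHull ℝ {x : EuclideanSpace ℝ (Fin d) | x ∈ S ∧ ⟪x, c⟫ = M} := by
  obtain ⟨x₀, hx₀S, hx₀⟩ := hmem
  apply Set.Subset.antisymm
  · rintro x ⟨hxP, hxmax⟩
    have hxc : ⟪x, c⟫ = M := le_antisymm (inner_le_of_mem_hull hub hxP)
      (hx₀ ▸ hxmax x₀ (subset_convexHull ℝ _ hx₀S))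
    rw [Finset.convexHull_eq] at hxP
    obtain ⟨lam, h0, h1, hcm⟩ := hxP
    have hxsum : x = ∑ y ∈ S, lam y • y := by
      rw [← hcm, Finset.centerMass_eq_of_sum_1 _ _ h1]; rfl
    have hic : ⟪x, c⟫ = ∑ y ∈ S, lam y * ⟪y, c⟫ := by
      rw [hxsum, sum_inner]
      exact Finset.sum_congr rfl fun y _ => real_inner_smul_left y c (lam y)
    have hzero : ∑ y ∈ S, lam y * (M - ⟪y, c⟫) = 0 := by
      have : ∑ y ∈ S, lam y * (M - ⟪y, c⟫)
          = (∑ y ∈ S, lam y) * M - ∑ y ∈ S, lam y * ⟪y, c⟫ := by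
        rw [Finset.sum_mul, ← Finset.sum_sub_distrib]
        exact Finset.sum_congr rfl fun y _ => by ring
      rw [this, h1, ← hic, hxc]; ring
    have hdich : ∀ y ∈ S, lam y ≠ 0 → ⟪y, c⟫ = M := by
      intro y hy hly
      have hall := (Finset.sum_eq_zero_iff_of_nonneg fun i hi =>
        mul_nonneg (h0 i hi) (sub_nonneg.mpr (hub i hi))).mp hzero y hy
      rcases mul_eq_zero.mp hall with h | h
      · exact absurd h hly
      · linarith [sub_eq_zero.mp h]
    set T := S.filter (fun y => ⟪y, c⟫ = M) with hT
    have hsum_eq : ∀ (g : EuclideanSpace ℝ (Fin d) → ℝ) (f : EuclideanSpace ℝ (Fin d) → EuclideanSpace ℝ (Fin d)),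
        True := fun _ _ => trivial
    have hTsum : ∑ y ∈ T, lam y = 1 := by
      rw [hT, Finset.sum_filter_of_ne (fun y hy h => hdich y hy h), h1]
    have hTvec : ∑ y ∈ T, lam y • y = x := by
      rw [hT, Finset.sum_filter_of_ne (fun y hy h => hdich y hy (fun h0 => by simp [h0] at h)), ← hxsum]
    have hmemT : x ∈ convexHull ℝ (T : Set (EuclideanSpace ℝ (Fin d))) := by
      have := T.centerMass_mem_convexHull (w := lam) (z := id)
        (fun i hi => h0 i (Finset.mem_filter.mp hi).1)
        (by rw [hTsum]; norm_num) (fun i hi => Finset.mem_coe.mpr hi)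
      rwa [Finset.centerMass_eq_of_sum_1 _ _ hTsum, show ∑ i ∈ T, lam i • id i = x from hTvec] at this
    have : (T : Set (EuclideanSpace ℝ (Fin d))) = {x | x ∈ S ∧ ⟪x, c⟫ = M} := by
      ext y; simp [hT]
    rwa [this] at hmemT
  · intro x hx
    have hsub : {x : EuclideanSpace ℝ (Fin d) | x ∈ S ∧ ⟪x, c⟫ = M} ⊆ (S : Set _) :=
      fun y hy => hy.1
    have hxP : x ∈ convexHull ℝ (S : Set (EuclideanSpace ℝ (Fin d))) :=
      convexHull_mono hsub hx
    have hxle : ⟪x, c⟫ ≤ M :=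
      convexHull_min (t := {y | ⟪y, c⟫ ≤ M}) (fun y hy => le_of_eq hy.2) (convex_halfSpace_le (innerLin c) M) hx
    have hxge : M ≤ ⟪x, c⟫ :=
      convexHull_min (t := {y | M ≤ ⟪y, c⟫}) (fun y hy => le_of_eq hy.2.symm) (convex_halfSpace_ge (innerLin c) M) hx
    exact ⟨hxP, fun y hy => (inner_le_of_mem_hull hub hy).trans (le_antisymm hxle hxge).symm.le⟩

private lemma open_dense_avoid {ι : Type*} [DecidableEq ι] (g : ι → EuclideanSpace ℝ (Fin d))
    (A : Finset ι) (hg : ∀ i ∈ A, g i ≠ 0) :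
    IsOpen {c : EuclideanSpace ℝ (Fin d) | ∀ i ∈ A, ⟪g i, c⟫ ≠ 0} ∧
      Dense {c : EuclideanSpace ℝ (Fin d) | ∀ i ∈ A, ⟪g i, c⟫ ≠ 0} := by
  induction A using Finset.induction_on with
  | empty =>
    constructor
    · simpa using isOpen_univ
    · simpa using dense_univ
  | @insert a A ha ih =>
    obtain ⟨ihO, ihD⟩ := ih (fun i hi => hg i (Finset.mem_insert_of_mem hi))
    have hga : g a ≠ 0 := hg a (Finset.mem_insert_self a A)
    have hsplit : {c : EuclideanSpace ℝ (Fin d) | ∀ i ∈ insert a A, ⟪g i, c⟫ ≠ 0}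
        = {c : EuclideanSpace ℝ (Fin d) | ⟪g a, c⟫ ≠ 0}
          ∩ {c : EuclideanSpace ℝ (Fin d) | ∀ i ∈ A, ⟪g i, c⟫ ≠ 0} := by
      ext c
      simp only [Set.mem_setOf_eq, Set.mem_inter_iff, Finset.mem_insert]
      constructor
      · exact fun h => ⟨h a (Or.inl rfl), fun i hi => h i (Or.inr hi)⟩
      · rintro ⟨h1, h2⟩ i (rfl | hi)
        exacts [h1, h2 i hi]
    have hOa : IsOpen {c : EuclideanSpace ℝ (Fin d) | ⟪g a, c⟫ ≠ 0} := by
      have hc : Continuous fun c : EuclideanSpace ℝ (Fin d) => (⟪g a, c⟫ : ℝ) :=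
        Continuous.inner continuous_const continuous_id
      exact IsOpen.preimage hc isOpen_ne
    rw [hsplit]
    exact ⟨hOa.inter ihO, (dense_inner_ne hga).inter_of_isOpen_left ihD hOa⟩

set_option maxHeartbeats 2000000 in
/-- The local-improvement fact underlying the simplex method: if a vertex `v` of a
convex polytope `P` does not maximize the linear functional `x ↦ ⟪x, n⟫` over `P`,
then there is a vertex `w` adjacent to `v` (i.e. `[v, w]` is an edge of `P`, a face
that is the set of maximizers of some linear functional) with `⟪w, n⟫ > ⟪v, n⟫`. -/
theorem stmt18 {d : ℕ} (V : Finset (EuclideanSpace ℝ (Fin d)))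
    (P : Set (EuclideanSpace ℝ (Fin d)))
    (hP : P = convexHull ℝ (V : Set (EuclideanSpace ℝ (Fin d))))
    (n : EuclideanSpace ℝ (Fin d)) (hn : n ≠ 0)
    (v : EuclideanSpace ℝ (Fin d)) (hv : v ∈ P.extremePoints ℝ)
    (hnotmax : ¬ ∀ x ∈ P, ⟪x, n⟫ ≤ ⟪v, n⟫) :
    ∃ w ∈ P.extremePoints ℝ, w ≠ v ∧ ⟪v, n⟫ < ⟪w, n⟫ ∧
      ∃ u : EuclideanSpace ℝ (Fin d),
        {x ∈ P | ∀ y ∈ P, ⟪y, u⟫ ≤ ⟪x, u⟫} = segment ℝ v w := by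
  classical
  have hPconv : Convex ℝ P := hP ▸ convex_convexHull ℝ _
  have hPcomp : IsCompact P := hP ▸ V.finite_toSet.isCompact_convexHull (𝕜 := ℝ)
  have hfin : (P.extremePoints ℝ).Finite :=
    V.finite_toSet.subset (by rw [hP]; exact extremePoints_convexHull_subset)
  set S : Finset (EuclideanSpace ℝ (Fin d)) := hfin.toFinset with hSdef
  have hScoe : (S : Set (EuclideanSpace ℝ (Fin d))) = P.extremePoints ℝ := hfin.coe_toFinset
  have hSP : convexHull ℝ (S : Set (EuclideanSpace ℝ (Fin d))) = P := by
    have h2 : IsClosed (convexHull ℝ (S : Set (EuclideanSpace ℝ (Fin d)))) :=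
      (S.finite_toSet.isCompact_convexHull (𝕜 := ℝ)).isClosed
    calc convexHull ℝ (S : Set (EuclideanSpace ℝ (Fin d)))
        = closure (convexHull ℝ (S : Set (EuclideanSpace ℝ (Fin d)))) := h2.closure_eq.symm
      _ = closure (convexHull ℝ (P.extremePoints ℝ)) := by rw [hScoe]
      _ = P := closure_convexHull_extremePoints hPcomp hPconv
  have hSext : ∀ x ∈ S, x ∈ P.extremePoints ℝ := fun x hx => by
    rw [← hScoe]; exact Finset.mem_coe.mpr hx
  have hSmemP : ∀ x ∈ S, x ∈ P := fun x hx => extremePoints_subset (hSext x hx)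
  have hvS : v ∈ S := by rw [← Finset.mem_coe, hScoe]; exact hv
  have hvP : v ∈ P := extremePoints_subset hv
  -- the improving vertices
  set B := S.filter (fun x => ⟪v, n⟫ < ⟪x, n⟫) with hBdef
  have hB : B.Nonempty := by
    by_contra hBe
    rw [Finset.not_nonempty_iff_eq_empty, Finset.filter_eq_empty_iff] at hBe
    apply hnotmax
    intro x hx
    exact inner_le_of_mem_hull (fun s hs => le_of_not_gt (hBe hs)) (by rw [hSP]; exact hx)
  -- v is exposed: some c₀ strictly separates v from the other extreme points
  have hvnot : v ∉ convexHull ℝ ((S.erase v : Finset _) : Set (EuclideanSpace ℝ (Fin d))) := by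
    have hmem := hPconv.mem_extremePoints_iff_mem_diff_convexHull_diff.mp hv
    intro hcon
    refine hmem.2 (convexHull_mono (fun x hx => ?_) hcon)
    exact ⟨hSmemP x (Finset.mem_of_mem_erase hx),
      by simp [Finset.ne_of_mem_erase (Finset.mem_coe.mp hx)]⟩
  obtain ⟨f, u0, hfa, hfv⟩ := geometric_hahn_banach_closed_point
    (convex_convexHull ℝ _) ((S.erase v).finite_toSet.isCompact_convexHull (𝕜 := ℝ)).isClosed hvnot
  set c₀ := (InnerProductSpace.toDual ℝ (EuclideanSpace ℝ (Fin d))).symm f with hc₀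
  have hc₀app : ∀ x, ⟪x, c₀⟫ = f x := fun x => by
    rw [real_inner_comm, hc₀, InnerProductSpace.toDual_symm_apply]
  -- the open set of strictly exposing functionals
  set U := {c : EuclideanSpace ℝ (Fin d) | ∀ x ∈ S.erase v, ⟪x, c⟫ < ⟪v, c⟫} with hU
  have hUopen : IsOpen U := by
    have : U = ⋂ x : {x // x ∈ S.erase v},
        {c : EuclideanSpace ℝ (Fin d) | ⟪(x : EuclideanSpace ℝ (Fin d)), c⟫ < ⟪v, c⟫} := by
      ext c; simp [hU, Set.mem_iInter, Subtype.forall]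
    rw [this]
    exact isOpen_iInter_of_finite fun x =>
      isOpen_lt (Continuous.inner continuous_const continuous_id)
        (Continuous.inner continuous_const continuous_id)
  have hUne : U.Nonempty := ⟨c₀, fun x hx => by
    rw [hc₀app, hc₀app]
    exact lt_trans (hfa x (subset_convexHull ℝ _ (Finset.mem_coe.mpr hx))) hfv⟩
  -- the hyperplanes to avoid
  set β : EuclideanSpace ℝ (Fin d) → ℝ := fun x => ⟪x, n⟫ - ⟪v, n⟫ with hβ
  set z : EuclideanSpace ℝ (Fin d) × EuclideanSpace ℝ (Fin d) → EuclideanSpace ℝ (Fin d) :=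
    fun p => β p.2 • (v - p.1) - β p.1 • (v - p.2) with hzdef
  set A := (B ×ˢ B).filter (fun p => p.1 ≠ p.2) with hA
  have hBβ : ∀ x ∈ B, 0 < β x := fun x hx => sub_pos.mpr (Finset.mem_filter.mp hx).2
  have hBS : ∀ x ∈ B, x ∈ S := fun x hx => (Finset.mem_filter.mp hx).1
  have hzne : ∀ p ∈ A, z p ≠ 0 := by
    rintro ⟨x, y⟩ hp hzero
    rw [hA, Finset.mem_filter, Finset.mem_product] at hp
    obtain ⟨⟨hxB, hyB⟩, hxy⟩ := hp
    have hβx : 0 < β x := hBβ x hxB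
    have hβy : 0 < β y := hBβ y hyB
    have h1 : β y • (v - x) = β x • (v - y) := sub_eq_zero.mp hzero
    have hxP : x ∈ P := hSmemP x (hBS x hxB)
    have hyP : y ∈ P := hSmemP y (hBS y hyB)
    have hvx : v ≠ x := fun h => by
      have : β x = 0 := by rw [hβ, ← h]; ring
      linarith
    have hvy : v ≠ y := fun h => by
      have : β y = 0 := by rw [hβ, ← h]; ring
      linarith
    rcases lt_trichotomy (β x) (β y) with h | h | h
    · -- x is in the open segment (v, y)
      have h2 : v - x = (β x / β y) • (v - y) := by
        have h3 := congrArg (fun w : EuclideanSpace ℝ (Fin d) => (β y)⁻¹ • w) h1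
        simp only [smul_smul, inv_mul_cancel₀ hβy.ne', one_smul] at h3
        rw [h3, div_eq_inv_mul]
      have hx' : (1 - β x / β y) • v + (β x / β y) • y = x :=
        calc (1 - β x / β y) • v + (β x / β y) • y
            = v - (β x / β y) • (v - y) := by rw [smul_sub, sub_smul, one_smul]; abel
          _ = v - (v - x) := by rw [h2]
          _ = x := by abel
      have hseg : x ∈ openSegment ℝ v y := by
        refine ⟨1 - β x / β y, β x / β y, ?_, div_pos hβx hβy, by ring, hx'⟩
        rw [sub_pos, div_lt_one hβy]; exact h
      have hxe := (hSext x (hBS x hxB)).2 hvP hyP hseg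
      exact hvx hxe
    · -- β x = β y forces x = y
      rw [h] at h1
      have : v - x = v - y := smul_right_injective _ hβy.ne' h1
      have : x = y := by
        have h5 := congrArg (fun w : EuclideanSpace ℝ (Fin d) => v - w) this
        simpa using h5
      exact hxy this
    · -- y is in the open segment (v, x)
      have h2 : v - y = (β y / β x) • (v - x) := by
        have h3 := congrArg (fun w : EuclideanSpace ℝ (Fin d) => (β x)⁻¹ • w) h1.symm
        simp only [smul_smul, inv_mul_cancel₀ hβx.ne', one_smul] at h3
        rw [h3, div_eq_inv_mul]
      have hy' : (1 - β y / β x) • v + (β y / β x) • x = y :=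
        calc (1 - β y / β x) • v + (β y / β x) • x
            = v - (β y / β x) • (v - x) := by rw [smul_sub, sub_smul, one_smul]; abel
          _ = v - (v - y) := by rw [h2]
          _ = y := by abel
      have hseg : y ∈ openSegment ℝ v x := by
        refine ⟨1 - β y / β x, β y / β x, ?_, div_pos hβy hβx, by ring, hy'⟩
        rw [sub_pos, div_lt_one hβx]; exact h
      have hye := (hSext y (hBS y hyB)).2 hvP hxP hseg
      exact hvy hye
  obtain ⟨hDopen, hDdense⟩ := open_dense_avoid z A hzne
  obtain ⟨c, hcU, hcD⟩ := hDdense.inter_open_nonempty U hUopen hUne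
  rw [hU] at hcU
  have hα : ∀ x ∈ S, x ≠ v → 0 < ⟪v, c⟫ - ⟪x, c⟫ := fun x hx hxv =>
    sub_pos.mpr (hcU x (Finset.mem_erase.mpr ⟨hxv, hx⟩))
  -- parametric step
  set tfun : EuclideanSpace ℝ (Fin d) → ℝ :=
    fun x => (⟪v, c⟫ - ⟪x, c⟫) / (⟪x, n⟫ - ⟪v, n⟫) with htfun
  obtain ⟨w, hwB, hweq⟩ := B.exists_mem_eq_inf' hB tfun
  set tstar := B.inf' hB tfun with htstar
  have hwS : w ∈ S := hBS w hwB
  have hβw : 0 < β w := hBβ w hwB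
  have hwv : w ≠ v := fun h => by
    have : β w = 0 := by rw [hβ, h]; ring
    linarith
  have hαw : 0 < ⟪v, c⟫ - ⟪w, c⟫ := hα w hwS hwv
  have hβw' : 0 < ⟪w, n⟫ - ⟪v, n⟫ := hβw
  have htpos : 0 < tstar := by rw [hweq, htfun]; exact div_pos hαw hβw'
  have hmin : ∀ x ∈ B, tstar ≤ tfun x := fun x hx => Finset.inf'_le tfun hx
  have huniq : ∀ x ∈ B, x ≠ w → tstar < tfun x := by
    intro x hx hxw
    rcases lt_or_eq_of_le (hmin x hx) with h | h
    · exact h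
    · exfalso
      have hβx' : 0 < ⟪x, n⟫ - ⟪v, n⟫ := hBβ x hx
      have heq : (⟪v, c⟫ - ⟪x, c⟫) / (⟪x, n⟫ - ⟪v, n⟫)
          = (⟪v, c⟫ - ⟪w, c⟫) / (⟪w, n⟫ - ⟪v, n⟫) := h.symm.trans hweq
      have hcross : (⟪v, c⟫ - ⟪x, c⟫) * (⟪w, n⟫ - ⟪v, n⟫)
          = (⟪v, c⟫ - ⟪w, c⟫) * (⟪x, n⟫ - ⟪v, n⟫) :=
        (div_eq_div_iff hβx'.ne' hβw'.ne').mp heq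
      have hmemA : (x, w) ∈ A := by
        rw [hA, Finset.mem_filter, Finset.mem_product]
        exact ⟨⟨hx, hwB⟩, hxw⟩
      apply hcD (x, w) hmemA
      show ⟪β w • (v - x) - β x • (v - w), c⟫ = 0
      rw [inner_sub_left, real_inner_smul_left, real_inner_smul_left,
        inner_sub_left, inner_sub_left]
      show (⟪w, n⟫ - ⟪v, n⟫) * (⟪v, c⟫ - ⟪x, c⟫)
        - (⟪x, n⟫ - ⟪v, n⟫) * (⟪v, c⟫ - ⟪w, c⟫) = 0
      linear_combination hcross
  -- the edge functional
  refine ⟨w, hSext w hwS, hwv, (Finset.mem_filter.mp hwB).2, c + tstar • n, ?_⟩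
  set u := c + tstar • n with hu
  have hinner : ∀ x, ⟪x, u⟫ = ⟪x, c⟫ + tstar * ⟪x, n⟫ := fun x => by
    rw [hu, inner_add_right, real_inner_smul_right]
  have hwM : ⟪w, u⟫ = ⟪v, u⟫ := by
    have hts : tstar * (⟪w, n⟫ - ⟪v, n⟫) = ⟪v, c⟫ - ⟪w, c⟫ := by
      rw [hweq]
      exact div_mul_cancel₀ _ hβw'.ne'
    rw [hinner, hinner]
    linarith [hts, mul_sub tstar (⟪w, n⟫ : ℝ) (⟪v, n⟫ : ℝ)]
  have hstrict : ∀ x ∈ S, x ≠ v → x ≠ w → ⟪x, u⟫ < ⟪v, u⟫ := by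
    intro x hxS hxv hxw
    rw [hinner, hinner]
    by_cases hxB : x ∈ B
    · have h1 : tstar < tfun x := huniq x hxB hxw
      have hβx' : 0 < ⟪x, n⟫ - ⟪v, n⟫ := hBβ x hxB
      have h2 : tstar * (⟪x, n⟫ - ⟪v, n⟫) < ⟪v, c⟫ - ⟪x, c⟫ :=
        (lt_div_iff₀ hβx').mp h1
      linarith [h2, mul_sub tstar (⟪x, n⟫ : ℝ) (⟪v, n⟫ : ℝ)]
    · have hβx : ⟪x, n⟫ - ⟪v, n⟫ ≤ 0 := by
        rw [hBdef, Finset.mem_filter] at hxB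
        push_neg at hxB
        have := hxB hxS
        linarith
      have hαx : 0 < ⟪v, c⟫ - ⟪x, c⟫ := hα x hxS hxv
      linarith [mul_nonpos_of_nonneg_of_nonpos htpos.le hβx,
        mul_sub tstar (⟪x, n⟫ : ℝ) (⟪v, n⟫ : ℝ)]
  have hub : ∀ x ∈ S, ⟪x, u⟫ ≤ ⟪v, u⟫ := by
    intro x hxS
    by_cases hxv : x = v
    · rw [hxv]
    · by_cases hxw : x = w
      · rw [hxw, hwM]
      · exact (hstrict x hxS hxv hxw).le
  have hface := face_eq hub ⟨v, hvS, rfl⟩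
  have hset : {x : EuclideanSpace ℝ (Fin d) | x ∈ S ∧ ⟪x, u⟫ = ⟪v, u⟫} = {v, w} := by
    ext x
    constructor
    · rintro ⟨hxS, hxM⟩
      by_contra hne
      rw [Set.mem_insert_iff, Set.mem_singleton_iff] at hne
      push_neg at hne
      exact absurd hxM (ne_of_lt (hstrict x hxS hne.1 hne.2))
    · rintro (rfl | rfl)
      · exact ⟨hvS, rfl⟩
      · exact ⟨hwS, hwM⟩
  rw [hSP] at hface
  rw [hface, hset, convexHull_pair, segment_symm]
end
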